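/- Let q ≡ 2 (mod 3) be a prime power. The set L₀ = {x ∈ F_{q³}* : Tr_{q³/q}(x) = 0 and N_{q³/q}(x) = 1} has exactly q+1 elements. -/

import Mathlib

open Polynomial Finset

private lemma card_filter_le_natDegree {K : Type} [Field K] [Fintype K] [DecidableEq K]
    (P : K[X]) (hP : P ≠ 0) (pred : K → Prop) [DecidablePred pred]
    (h : ∀ x, pred x → P.eval x = 0) :
    (Finset.univ.filter pred).card ≤ P.natDegree := by
  calc (Finset.univ.filter pred).card
      ≤ P.roots.toFinset.card := Finset.card_le_card (by
        intro x hx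
        simp only [Finset.mem_filter] at hx
        rw [Multiset.mem_toFinset, mem_roots hP]
        exact h x hx.2)
    _ ≤ Multiset.card P.roots := Multiset.toFinset_card_le _
    _ ≤ P.natDegree := P.card_roots'

theorem card_L0 (q : ℕ) (hq : q % 3 = 2)
    (K : Type) [Field K] [Fintype K] (hK : Fintype.card K = q ^ 3) :
    {x : K | x ≠ 0 ∧ x + x ^ q + x ^ q ^ 2 = 0 ∧ x ^ (1 + q + q ^ 2) = 1}.ncard = q + 1 := by
  classical
  have hq2 : 2 ≤ q := by omega
  -- q is a power of the characteristic
  obtain ⟨n, hp, hcard⟩ := FiniteField.card K (ringChar K)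
  have hqpk : ∃ k, q = (ringChar K) ^ k := by
    have hdvd : q ∣ (ringChar K) ^ (n : ℕ) := by
      rw [← hcard, hK]; exact dvd_pow_self q (by norm_num)
    obtain ⟨k, -, rfl⟩ := (Nat.dvd_prime_pow hp).mp hdvd
    exact ⟨k, rfl⟩
  obtain ⟨k, hk⟩ := hqpk
  haveI : Fact (ringChar K).Prime := ⟨hp⟩
  have addpow : ∀ x y : K, (x + y) ^ q = x ^ q + y ^ q := by
    intro x y; rw [hk]; exact add_pow_char_pow ..
  have key : ∀ x : K, x ^ q ^ 3 = x := by
    intro x; rw [← hK]; exact FiniteField.pow_card x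
  have powqq : ∀ x : K, (x ^ q) ^ q = x ^ q ^ 2 := by
    intro x; rw [← pow_mul, pow_two]
  have powq3 : ∀ x : K, (x ^ q ^ 2) ^ q = x := by
    intro x; rw [← pow_mul, show q ^ 2 * q = q ^ 3 by ring, key]
  -- the trace as an additive hom
  have hTr_add : ∀ x y : K,
      (fun z : K => z + z ^ q + z ^ q ^ 2) (x + y)
        = (fun z : K => z + z ^ q + z ^ q ^ 2) x + (fun z : K => z + z ^ q + z ^ q ^ 2) y := by
    intro x y
    simp only
    rw [← powqq (x + y), addpow x y, addpow (x ^ q) (y ^ q), powqq, powqq]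
    ring
  set T : K →+ K := AddMonoidHom.mk' (fun z : K => z + z ^ q + z ^ q ^ 2) hTr_add with hT_def
  have hT_apply : ∀ x : K, T x = x + x ^ q + x ^ q ^ 2 := fun x => rfl
  have hT_q : ∀ x : K, (T x) ^ q = T x := by
    intro x
    rw [hT_apply, addpow, addpow, powqq, powq3]
    ring
  have hN_q : ∀ x : K, (x ^ (1 + q + q ^ 2)) ^ q = x ^ (1 + q + q ^ 2) := by
    intro x
    rw [← pow_mul, show (1 + q + q ^ 2) * q = q ^ 3 + (q + q ^ 2) by ring, pow_add, key]
    ring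
  set A : Finset K := univ.filter (fun x : K => T x = 0) with hA_def
  set Fs : Finset K := univ.filter (fun x : K => x ^ q = x) with hFs_def
  -- polynomial bounds
  have hF_le : Fs.card ≤ q := by
    have hm : (X ^ q - X : K[X]).Monic := monic_X_pow_sub (by
      rw [degree_X]; exact_mod_cast hq2)
    refine le_trans (card_filter_le_natDegree _ hm.ne_zero _ ?_) ?_
    · intro x hx
      simp only [eval_sub, eval_pow, eval_X]
      rw [hx, sub_self]
    · refine le_trans (natDegree_sub_le _ _) ?_
      simp [natDegree_X_pow, natDegree_X]
      omega
  have hA_le : A.card ≤ q ^ 2 := by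
    have hdeg : (X ^ q + X : K[X]).degree < (q ^ 2 : ℕ) := by
      refine lt_of_le_of_lt (degree_add_le _ _) ?_
      rw [degree_X_pow, degree_X]
      have h1 : (1 : WithBot ℕ) < ((q ^ 2 : ℕ) : WithBot ℕ) := by
        exact_mod_cast (by nlinarith : 1 < q ^ 2)
      have h2 : ((q : ℕ) : WithBot ℕ) < ((q ^ 2 : ℕ) : WithBot ℕ) := by
        exact_mod_cast (by nlinarith : q < q ^ 2)
      exact max_lt h2 h1
    have hm : (X ^ q ^ 2 + (X ^ q + X) : K[X]).Monic := monic_X_pow_add hdeg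
    refine le_trans (card_filter_le_natDegree _ hm.ne_zero _ ?_) ?_
    · intro x hx
      rw [hA_def, hT_apply] at *
      simp only [eval_add, eval_pow, eval_X]
      linear_combination hx
    · refine le_trans (natDegree_add_le _ _) ?_
      refine max_le (by simp) (le_trans (natDegree_add_le _ _) ?_)
      simp [natDegree_X_pow, natDegree_X]
      constructor <;> nlinarith
  set Im : Finset K := univ.image (fun x => T x) with hIm_def
  have hIm_sub : Im ⊆ Fs := by
    intro c hc
    rw [hIm_def, mem_image] at hc
    obtain ⟨x, -, rfl⟩ := hc
    rw [hFs_def, mem_filter]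
    exact ⟨mem_univ _, hT_q x⟩
  have hfib : ∀ c ∈ Im, (univ.filter (fun x : K => T x = c)).card = A.card := by
    intro c hc
    rw [hIm_def, mem_image] at hc
    obtain ⟨x₀, -, rfl⟩ := hc
    refine Finset.card_nbij' (fun x => x - x₀) (fun a => a + x₀) ?_ ?_ ?_ ?_
    · intro x hx
      rw [mem_coe, mem_filter] at hx ⊢
      refine ⟨mem_univ _, ?_⟩
      rw [map_sub, hx.2, sub_self]
    · intro a ha
      rw [mem_coe, mem_filter] at ha ⊢
      refine ⟨mem_univ _, ?_⟩
      rw [map_add, ha.2, zero_add]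
    · intro x _; ring
    · intro x _; ring
  have hcardK : q ^ 3 = Im.card * A.card := by
    have h1 : (univ : Finset K).card
        = ∑ c ∈ Im, (univ.filter (fun x : K => T x = c)).card :=
      card_eq_sum_card_fiberwise (fun x _ => mem_image_of_mem _ (mem_univ x))
    rw [← hK, ← Finset.card_univ, h1, Finset.sum_congr rfl hfib, Finset.sum_const, smul_eq_mul]
  have hA_card : A.card = q ^ 2 := by
    have h1 : Im.card * A.card ≤ q * A.card :=
      Nat.mul_le_mul_right _ (le_trans (card_le_card hIm_sub) hF_le)
    rw [← hcardK] at h1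
    have h2 : q * q ^ 2 ≤ q * A.card := by
      calc q * q ^ 2 = q ^ 3 := by ring
        _ ≤ q * A.card := h1
    have := Nat.le_of_mul_le_mul_left h2 (by omega)
    omega
  have hIm_card : Im.card = q := by
    rw [hA_card] at hcardK
    have : q * q ^ 2 = Im.card * q ^ 2 := by rw [← hcardK]; ring
    exact (Nat.eq_of_mul_eq_mul_right (by positivity) this).symm
  have hFs_card : Fs.card = q :=
    le_antisymm hF_le (hIm_card ▸ card_le_card hIm_sub)
  -- norm fibers
  set S : K → Finset K := fun c =>
    univ.filter (fun x : K => x ≠ 0 ∧ T x = 0 ∧ x ^ (1 + q + q ^ 2) = c) with hS_def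
  have hTmul : ∀ (μ x : K), μ ^ q = μ → T (μ * x) = μ * T x := by
    intro μ x hμ
    rw [hT_apply, hT_apply, mul_pow, mul_pow, hμ, ← powqq μ, hμ, hμ]
    ring
  have hNmul : ∀ (μ x : K), μ ^ q = μ → (μ * x) ^ (1 + q + q ^ 2) = μ ^ 3 * x ^ (1 + q + q ^ 2) := by
    intro μ x hμ
    rw [mul_pow, show 1 + q + q ^ 2 = 1 + (q + q ^ 2) by ring, pow_add μ, pow_add μ, pow_one,
      ← powqq μ, hμ, hμ]
    ring_nf
  have hfib2 : ∀ c ∈ Fs.erase 0, (S c).card = (S 1).card := by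
    intro c hc
    rw [mem_erase, hFs_def, mem_filter] at hc
    obtain ⟨hc0, -, hcq⟩ := hc
    have hcq1 : c ^ (q - 1) = 1 := by
      have h1 : c ^ (q - 1) * c = 1 * c := by
        rw [one_mul, ← pow_succ, show q - 1 + 1 = q by omega, hcq]
      exact mul_right_cancel₀ hc0 h1
    set t := q / 3 with ht
    have hqt : q = 3 * t + 2 := by omega
    set lam : K := c ^ (2 * t + 1) with hlam
    have hlam0 : lam ≠ 0 := pow_ne_zero _ hc0
    have hlamq : lam ^ q = lam := by
      have h1 : lam ^ (q - 1) = 1 := by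
        rw [hlam, ← pow_mul, mul_comm, pow_mul, hcq1, one_pow]
      have h2 : lam ^ q = lam ^ (q - 1) * lam := by
        rw [← pow_succ]; congr 1; omega
      rw [h2, h1, one_mul]
    have hlam3 : lam ^ 3 = c := by
      rw [hlam, ← pow_mul, show (2 * t + 1) * 3 = (q - 1) * 2 + 1 by omega,
        pow_add, pow_mul, hcq1, one_pow, one_mul, pow_one]
    have hlaminvq : (lam⁻¹) ^ q = lam⁻¹ := by rw [inv_pow, hlamq]
    refine (Finset.card_nbij' (fun x => lam * x) (fun x => lam⁻¹ * x) ?_ ?_ ?_ ?_).symm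
    · intro x hx
      simp only [hS_def, mem_coe, mem_filter] at hx ⊢
      obtain ⟨-, hx0, hxT, hxN⟩ := hx
      refine ⟨mem_univ _, mul_ne_zero hlam0 hx0, ?_, ?_⟩
      · rw [hTmul lam x hlamq, hxT, mul_zero]
      · rw [hNmul lam x hlamq, hxN, mul_one, hlam3]
    · intro x hx
      simp only [hS_def, mem_coe, mem_filter] at hx ⊢
      obtain ⟨-, hx0, hxT, hxN⟩ := hx
      refine ⟨mem_univ _, mul_ne_zero (inv_ne_zero hlam0) hx0, ?_, ?_⟩
      · rw [hTmul lam⁻¹ x hlaminvq, hxT, mul_zero]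
      · rw [hNmul lam⁻¹ x hlaminvq, hxN, inv_pow, hlam3, inv_mul_cancel₀ hc0]
    · intro x _; exact inv_mul_cancel_left₀ hlam0 x
    · intro x _; exact mul_inv_cancel_left₀ hlam0 x
  -- fiberwise count of the trace-zero nonzero elements by norm
  set B : Finset K := A.erase 0 with hB_def
  have h0A : (0 : K) ∈ A := by
    rw [hA_def, mem_filter]
    exact ⟨mem_univ _, map_zero T⟩
  have hB_card : B.card = q ^ 2 - 1 := by
    rw [hB_def, card_erase_of_mem h0A, hA_card]
  have hBsum : B.card = ∑ c ∈ Fs.erase 0, (S c).card := by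
    have h1 : ∀ x ∈ B, x ^ (1 + q + q ^ 2) ∈ Fs.erase 0 := by
      intro x hx
      rw [hB_def, mem_erase] at hx
      rw [mem_erase, hFs_def, mem_filter]
      exact ⟨pow_ne_zero _ hx.1, mem_univ _, hN_q x⟩
    rw [card_eq_sum_card_fiberwise h1]
    refine Finset.sum_congr rfl ?_
    intro c _
    congr 1
    ext x
    simp only [hS_def, hB_def, hA_def, mem_filter, mem_erase, mem_univ, true_and]
    tauto
  have hsum : q ^ 2 - 1 = (q - 1) * (S 1).card := by
    rw [← hB_card, hBsum, Finset.sum_congr rfl hfib2, Finset.sum_const, smul_eq_mul]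
    congr 1
    rw [card_erase_of_mem, hFs_card]
    rw [hFs_def, mem_filter]
    exact ⟨mem_univ _, zero_pow (by omega)⟩
  -- final arithmetic
  have harith : (q - 1) * (q + 1) = q ^ 2 - 1 := by
    have h1 : 1 ≤ q := by omega
    have h2 : 1 ≤ q ^ 2 := Nat.one_le_pow _ _ (by omega)
    zify [h1, h2]
    ring
  have hfin : (S 1).card = q + 1 := by
    have h1 : (q - 1) * (S 1).card = (q - 1) * (q + 1) := by rw [harith, ← hsum]
    exact Nat.eq_of_mul_eq_mul_left (by omega) h1
  have hset : {x : K | x ≠ 0 ∧ x + x ^ q + x ^ q ^ 2 = 0 ∧ x ^ (1 + q + q ^ 2) = 1}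
      = ↑(S 1) := by
    ext x
    rw [hS_def]
    simp only [Set.mem_setOf_eq, coe_filter, mem_univ, true_and, hT_apply]
  rw [hset, Set.ncard_coe_finset, hfin]
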